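/- Let Q_t be a GBM with dQ_t = σ Q_t dB_t and let x*(Q) = K/√Q. Then the expected instantaneous LVR rate against an r-times more liquid CPMM satisfies E[ℓ(σ, Q_t, r)] = (σ²K/4)(1 − 1/r)·E[√Q_t] = (σ²K/4)(1 − 1/r)·√Q_0·e^{−σ²t/8}. -/

import Mathlib

open MeasureTheory ProbabilityTheory

/-- A standard one-dimensional Brownian motion. -/
def IsBrownianMotion {Ω : Type*} [MeasurableSpace Ω] (μ : Measure Ω) (B : ℝ → Ω → ℝ) : Prop :=
  (∀ t, Measurable (B t)) ∧
  (∀ᵐ ω ∂μ, B 0 ω = 0) ∧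
  (∀ᵐ ω ∂μ, Continuous fun t => B t ω) ∧
  (∀ s t : ℝ, 0 ≤ s → s ≤ t →
    Measure.map (fun ω => B t ω - B s ω) μ = gaussianReal 0 (Real.toNNReal (t - s))) ∧
  (∀ n : ℕ, ∀ t : ℕ → ℝ, Monotone t → 0 ≤ t 0 →
    iIndepFun
      (fun i : Fin n => fun ω => B (t (i + 1)) ω - B (t i) ω) μ)

/-- The instantaneous LVR rate for two CPMMs with relative liquidity r:
ℓ(σ,Q,r) = (σ²Q²/2)(1 − 1/r)·K/(2Q^{3/2}). -/
noncomputable def lvrRateCPMM (σ K r q : ℝ) : ℝ :=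
  σ ^ 2 * q ^ 2 / 2 * (1 - 1 / r) * (K / (2 * q ^ ((3 : ℝ) / 2)))

open scoped NNReal ENNReal Real

lemma mgf_gauss (c : ℝ) (v : ℝ≥0) :
    ∫ x, Real.exp (c * x) ∂(gaussianReal 0 v) = Real.exp (c ^ 2 * v / 2) := by
  by_cases hv : v = 0
  · simp [hv, gaussianReal_zero_var]
  · rw [gaussianReal_of_var_ne_zero _ hv]
    have hm : Measurable fun x : ℝ => (gaussianPDFReal 0 v x).toNNReal :=
      (measurable_gaussianPDFReal 0 v).real_toNNReal
    have hpdf : gaussianPDF 0 v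
        = fun x => ((fun x => (gaussianPDFReal 0 v x).toNNReal) x : ℝ≥0∞) := by
      ext x; simp [gaussianPDF, ENNReal.ofReal]
    rw [hpdf, integral_withDensity_eq_integral_smul hm]
    have hvpos : (0:ℝ) < (v:ℝ) := by positivity
    have key : ∀ x : ℝ, (gaussianPDFReal 0 v x).toNNReal • Real.exp (c * x)
        = Real.exp (c ^ 2 * v / 2) * gaussianPDFReal (c * v) v x := by
      intro x
      rw [NNReal.smul_def, smul_eq_mul, Real.coe_toNNReal _ (gaussianPDFReal_nonneg 0 v x)]
      unfold gaussianPDFReal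
      have hexp : -(x - 0) ^ 2 / (2 * (v:ℝ)) + c * x
          = c ^ 2 * v / 2 + -(x - c * v) ^ 2 / (2 * (v:ℝ)) := by
        field_simp
        ring
      rw [mul_assoc, ← Real.exp_add, hexp, Real.exp_add]
      ring
    simp_rw [key]
    rw [integral_const_mul, integral_gaussianPDFReal_eq_one _ hv, mul_one]

lemma sqrt_exp' (a : ℝ) : Real.sqrt (Real.exp a) = Real.exp (a / 2) := by
  rw [show Real.exp a = Real.exp (a / 2) ^ 2 by rw [sq, ← Real.exp_add]; ring_nf,
    Real.sqrt_sq (Real.exp_nonneg _)]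

lemma lvr_eq (σ K r q : ℝ) (hq : 0 < q) :
    lvrRateCPMM σ K r q = σ ^ 2 * K / 4 * (1 - 1 / r) * Real.sqrt q := by
  have hq32 : q ^ ((3:ℝ)/2) ≠ 0 := (Real.rpow_pos_of_pos hq _).ne'
  have h1 : Real.sqrt q = q ^ 2 / q ^ ((3:ℝ)/2) := by
    rw [← Real.rpow_natCast q 2, ← Real.rpow_sub hq, Real.sqrt_eq_rpow]
    norm_num
  rw [h1]
  unfold lvrRateCPMM
  field_simp
  ring

/-- For the driftless GBM Q_t = Q₀ exp(σB_t − σ²t/2) and x*(Q) = K/√Q, the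
expected instantaneous LVR rate against an r-times more liquid CPMM is
E[ℓ(σ,Q_t,r)] = (σ²K/4)(1 − 1/r)·E[√Q_t] = (σ²K/4)(1 − 1/r)·√Q₀·e^{−σ²t/8}. -/
theorem expected_lvr_rate_gbm
    {Ω : Type*} [MeasurableSpace Ω] (μ : Measure Ω) [IsProbabilityMeasure μ]
    (B : ℝ → Ω → ℝ) (hB : IsBrownianMotion μ B)
    (σ Q₀ K r : ℝ) (hσ : 0 < σ) (hQ₀ : 0 < Q₀) (hK : 0 < K) (hr : 1 ≤ r)
    (Q : ℝ → Ω → ℝ)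
    (hQ : ∀ t ω, Q t ω = Q₀ * Real.exp (σ * B t ω - σ ^ 2 * t / 2))
    (t : ℝ) (ht : 0 ≤ t) :
    (∫ ω, lvrRateCPMM σ K r (Q t ω) ∂μ)
        = σ ^ 2 * K / 4 * (1 - 1 / r) * ∫ ω, Real.sqrt (Q t ω) ∂μ ∧
    (∫ ω, lvrRateCPMM σ K r (Q t ω) ∂μ)
        = σ ^ 2 * K / 4 * (1 - 1 / r) * Real.sqrt Q₀ * Real.exp (-σ ^ 2 * t / 8) := by
  have hQpos : ∀ ω, 0 < Q t ω := fun ω => by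
    rw [hQ]; positivity
  have hpt : ∀ ω, lvrRateCPMM σ K r (Q t ω)
      = σ ^ 2 * K / 4 * (1 - 1 / r) * Real.sqrt (Q t ω) :=
    fun ω => lvr_eq σ K r _ (hQpos ω)
  have h1 : (∫ ω, lvrRateCPMM σ K r (Q t ω) ∂μ)
      = σ ^ 2 * K / 4 * (1 - 1 / r) * ∫ ω, Real.sqrt (Q t ω) ∂μ := by
    simp_rw [hpt]
    exact integral_const_mul _ _
  refine ⟨h1, ?_⟩
  have hsq : ∀ ω, Real.sqrt (Q t ω)
      = Real.sqrt Q₀ * Real.exp (-σ ^ 2 * t / 4) * Real.exp (σ / 2 * B t ω) := by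
    intro ω
    rw [hQ, Real.sqrt_mul hQ₀.le, sqrt_exp', mul_assoc, ← Real.exp_add]
    congr 2
    ring
  have hI : (∫ ω, Real.exp (σ / 2 * B t ω) ∂μ) = Real.exp ((σ / 2) ^ 2 * t / 2) := by
    have h0 : (fun ω => Real.exp (σ / 2 * B t ω))
        =ᵐ[μ] fun ω => Real.exp (σ / 2 * (B t ω - B 0 ω)) :=
      hB.2.1.mono fun ω h => by simp only [h, sub_zero]
    rw [integral_congr_ae h0]
    have hmeas : AEMeasurable (fun ω => B t ω - B 0 ω) μ :=
      ((hB.1 t).sub (hB.1 0)).aemeasurable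
    have hsm : AEStronglyMeasurable (fun x : ℝ => Real.exp (σ / 2 * x))
        (Measure.map (fun ω => B t ω - B 0 ω) μ) :=
      (Real.continuous_exp.comp (continuous_const.mul continuous_id)).aestronglyMeasurable
    rw [← integral_map hmeas hsm, hB.2.2.2.1 0 t le_rfl ht, sub_zero, mgf_gauss,
      Real.coe_toNNReal t ht]
  have hS : (∫ ω, Real.sqrt (Q t ω) ∂μ)
      = Real.sqrt Q₀ * Real.exp (-σ ^ 2 * t / 4) * Real.exp ((σ / 2) ^ 2 * t / 2) := by
    simp_rw [hsq]
    rw [integral_const_mul, hI]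
  rw [h1, hS]
  rw [mul_assoc (Real.sqrt Q₀), ← Real.exp_add]
  have : -σ ^ 2 * t / 4 + (σ / 2) ^ 2 * t / 2 = -σ ^ 2 * t / 8 := by ring
  rw [this]
  ring
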